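/- Let g : [0,∞) → ℝ be locally absolutely continuous with ‖φ^β g'‖_∞ < ∞, where φ(u) = √(u(1+cu)), c ≥ 0, 0 ≤ β ≤ 1. Then for all t, x > 0, |g(t) − g(x)| ≤ ‖φ^β g'‖_∞ · |t − x|^{1−β} · |∫_x^t du/φ(u)|^β. -/

import Mathlib

open MeasureTheory intervalIntegral

lemma stmt17_aux (c β : ℝ) (hc : 0 ≤ c) (hβ0 : 0 ≤ β) (hβ1 : β ≤ 1)
    (g g' : ℝ → ℝ) (M : ℝ)
    (hint : ∀ x t : ℝ, 0 < x → 0 < t → IntervalIntegrable g' volume x t)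
    (hftc : ∀ x t : ℝ, 0 < x → 0 < t → g t - g x = ∫ u in x..t, g' u)
    (hM : ∀ u : ℝ, 0 < u → Real.sqrt (u * (1 + c * u)) ^ β * |g' u| ≤ M)
    (t x : ℝ) (ht : 0 < t) (hx : 0 < x) (hxt : x ≤ t) :
    |g t - g x| ≤ M * |t - x| ^ (1 - β) *
      |∫ u in x..t, 1 / Real.sqrt (u * (1 + c * u))| ^ β := by
  set φ : ℝ → ℝ := fun u => Real.sqrt (u * (1 + c * u)) with hφ
  have hφcont : Continuous φ := by
    apply Real.continuous_sqrt.comp; continuity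
  have hφpos : ∀ u : ℝ, 0 < u → 0 < φ u := fun u hu =>
    Real.sqrt_pos.mpr (mul_pos hu (by positivity))
  have hM0 : 0 ≤ M := le_trans (by positivity) (hM x hx)
  -- pointwise bound
  have hpt : ∀ u ∈ Set.Icc x t, |g' u| ≤ M * (φ u) ^ (-β) := by
    intro u hu
    have hu0 : 0 < u := lt_of_lt_of_le hx hu.1
    have h1 : 0 < (φ u) ^ β := Real.rpow_pos_of_pos (hφpos u hu0) β
    rw [Real.rpow_neg (Real.sqrt_nonneg _), ← div_eq_mul_inv, le_div_iff₀ h1, mul_comm]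
    exact hM u hu0
  -- integrability of M * φ^(-β) on [x, t]
  have hcont2 : ContinuousOn (fun u => M * (φ u) ^ (-β)) (Set.Icc x t) := by
    apply ContinuousOn.mul continuousOn_const
    exact hφcont.continuousOn.rpow_const fun u hu =>
      Or.inl (ne_of_gt (hφpos u (lt_of_lt_of_le hx hu.1)))
  have hint2 : IntervalIntegrable (fun u => M * (φ u) ^ (-β)) volume x t := by
    apply ContinuousOn.intervalIntegrable
    rwa [Set.uIcc_of_le hxt]
  -- I ≥ 0
  have hInn : (0:ℝ) ≤ ∫ u in x..t, 1 / φ u :=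
    intervalIntegral.integral_nonneg hxt fun u _ => by positivity
  -- Key inequality (Hölder)
  have key : (∫ u in x..t, (φ u) ^ (-β)) ≤
      (t - x) ^ (1 - β) * (∫ u in x..t, 1 / φ u) ^ β := by
    rcases eq_or_lt_of_le hβ0 with hβ0' | hβ0'
    · simp [← hβ0', Real.rpow_one]
    rcases eq_or_lt_of_le hβ1 with hβ1' | hβ1'
    · subst hβ1'
      rw [sub_self, Real.rpow_zero, one_mul, Real.rpow_one]
      exact le_of_eq (intervalIntegral.integral_congr fun u _ => by
        rw [Real.rpow_neg_one, one_div])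
    -- 0 < β < 1
    set p : ℝ := (1 - β)⁻¹ with hp
    set q : ℝ := β⁻¹ with hq
    have hβlt : 0 < 1 - β := by linarith
    have hpq : p.HolderConjugate q :=
      Real.HolderConjugate.inv_inv hβlt hβ0' (by ring)
    set μ := volume.restrict (Set.Ioc x t) with hμ
    have hgm : AEStronglyMeasurable (fun u => (φ u) ^ (-β)) μ := by
      apply ContinuousOn.aestronglyMeasurable _ measurableSet_Ioc
      refine ((hφcont.continuousOn.rpow_const fun u hu =>
        Or.inl (ne_of_gt (hφpos u (lt_of_lt_of_le hx hu.1)))).mono Set.Ioc_subset_Icc_self)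
    have hgLp : MemLp (fun u => (φ u) ^ (-β)) (ENNReal.ofReal q) μ := by
      apply MemLp.of_bound hgm ((Real.sqrt x) ^ (-β))
      rw [hμ, ae_restrict_iff' measurableSet_Ioc]
      refine ae_of_all _ fun u hu => ?_
      have hu0 : 0 < u := lt_trans hx hu.1
      have hle : Real.sqrt x ≤ φ u := by
        apply Real.sqrt_le_sqrt
        nlinarith [hu.1.le, mul_nonneg hc (mul_nonneg hu0.le hu0.le)]
      rw [Real.norm_of_nonneg (Real.rpow_nonneg (Real.sqrt_nonneg _) _)]
      exact Real.rpow_le_rpow_of_nonpos (Real.sqrt_pos.mpr hx) hle (by linarith)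
    have hfLp : MemLp (fun _ : ℝ => (1:ℝ)) (ENNReal.ofReal p) μ := memLp_const 1
    have H := MeasureTheory.integral_mul_le_Lp_mul_Lq_of_nonneg hpq
      (ae_of_all μ fun _ => zero_le_one)
      (ae_of_all μ fun u => Real.rpow_nonneg (Real.sqrt_nonneg _) _) hfLp hgLp
    simp only [one_mul, Real.one_rpow] at H
    have h1 : (∫ _ in Set.Ioc x t, (1:ℝ)) = t - x := by
      simp [Real.volume_Ioc, ENNReal.toReal_ofReal (by linarith : (0:ℝ) ≤ t - x), hxt]
    have h2 : ∀ u : ℝ, ((φ u) ^ (-β)) ^ q = 1 / φ u := fun u => by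
      rw [← Real.rpow_mul (Real.sqrt_nonneg _)]
      have : -β * q = -1 := by rw [hq]; field_simp
      rw [this, Real.rpow_neg_one, one_div]
    have hinvp : 1 / p = 1 - β := by rw [hp, one_div, inv_inv]
    have hinvq : 1 / q = β := by rw [hq, one_div, inv_inv]
    rw [intervalIntegral.integral_of_le hxt, intervalIntegral.integral_of_le hxt]
    calc ∫ u in Set.Ioc x t, (φ u) ^ (-β) ≤
        (∫ _ in Set.Ioc x t, (1:ℝ)) ^ (1/p) * (∫ u in Set.Ioc x t, ((φ u) ^ (-β)) ^ q) ^ (1/q) := H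
      _ = (t - x) ^ (1 - β) * (∫ u in Set.Ioc x t, 1 / φ u) ^ β := by
          rw [h1, hinvp, hinvq]
          congr 1
          congr 1
          exact setIntegral_congr_fun measurableSet_Ioc (fun u _ => h2 u)
  -- main chain
  have step1 : |g t - g x| ≤ ∫ u in x..t, |g' u| := by
    rw [hftc x t hx ht]
    exact intervalIntegral.abs_integral_le_integral_abs hxt
  have step2 : (∫ u in x..t, |g' u|) ≤ ∫ u in x..t, M * (φ u) ^ (-β) :=
    intervalIntegral.integral_mono_on hxt (hint x t hx ht).abs hint2 hpt
  have step3 : (∫ u in x..t, M * (φ u) ^ (-β)) = M * ∫ u in x..t, (φ u) ^ (-β) :=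
    intervalIntegral.integral_const_mul M _
  have habs1 : |t - x| = t - x := abs_of_nonneg (by linarith)
  have habs2 : |∫ u in x..t, 1 / φ u| = ∫ u in x..t, 1 / φ u := abs_of_nonneg hInn
  calc |g t - g x| ≤ ∫ u in x..t, M * (φ u) ^ (-β) := le_trans step1 step2
    _ = M * ∫ u in x..t, (φ u) ^ (-β) := step3
    _ ≤ M * ((t - x) ^ (1 - β) * (∫ u in x..t, 1 / φ u) ^ β) := by
        exact mul_le_mul_of_nonneg_left key hM0
    _ = M * |t - x| ^ (1 - β) * |∫ u in x..t, 1 / φ u| ^ β := by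
        rw [habs1, habs2, mul_assoc]

theorem stmt_17 (c β : ℝ) (hc : 0 ≤ c) (hβ0 : 0 ≤ β) (hβ1 : β ≤ 1)
    (g g' : ℝ → ℝ) (M : ℝ)
    (hint : ∀ x t : ℝ, 0 < x → 0 < t → IntervalIntegrable g' volume x t)
    (hftc : ∀ x t : ℝ, 0 < x → 0 < t → g t - g x = ∫ u in x..t, g' u)
    (hM : ∀ u : ℝ, 0 < u → Real.sqrt (u * (1 + c * u)) ^ β * |g' u| ≤ M)
    (t x : ℝ) (ht : 0 < t) (hx : 0 < x) :
    |g t - g x| ≤ M * |t - x| ^ (1 - β) *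
      |∫ u in x..t, 1 / Real.sqrt (u * (1 + c * u))| ^ β := by
  rcases le_total x t with h | h
  · exact stmt17_aux c β hc hβ0 hβ1 g g' M hint hftc hM t x ht hx h
  · have := stmt17_aux c β hc hβ0 hβ1 g g' M hint hftc hM x t hx ht h
    rw [abs_sub_comm (g x), abs_sub_comm x t,
      intervalIntegral.integral_symm x t, abs_neg] at this
    exact this
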